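/- Let Δₙ denote the standard simplex of ℝⁿ, i.e., the set of vectors p ∈ ℝⁿ with nonnegative entries summing to 1. A function f : ℝⁿ → ℝ is monotone and additively homogeneous if, and only if, for every x ∈ ℝⁿ, f(x) = min_{y ∈ ℝⁿ, f(y)=0} max_{p ∈ Δₙ} ⟨p, x−y⟩, where ⟨·,·⟩ is the usual scalar product on ℝⁿ, both the minimum (over the set of y with f(y)=0) and the maximum being attained. -/

import Mathlib

lemma stmt9_sup'_add_const {n : ℕ} (hne : (Finset.univ : Finset (Fin n)).Nonempty)
    (v : Fin n → ℝ) (c : ℝ) :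
    Finset.univ.sup' hne (fun j => v j + c) = Finset.univ.sup' hne v + c := by
  apply le_antisymm
  · exact Finset.sup'_le _ _ fun j _ => add_le_add_left (Finset.le_sup' v (Finset.mem_univ j)) c
  · obtain ⟨j0, -, hj0⟩ := Finset.exists_mem_eq_sup' hne v
    rw [hj0]
    exact Finset.le_sup' (fun j => v j + c) (Finset.mem_univ j0)

lemma stmt9_aux {n : ℕ} (hne : (Finset.univ : Finset (Fin n)).Nonempty) (v : Fin n → ℝ) :
    IsGreatest {s : ℝ | ∃ p : Fin n → ℝ,
      ((∀ i, 0 ≤ p i) ∧ ∑ i, p i = 1) ∧ s = ∑ j, p j * v j}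
      (Finset.univ.sup' hne v) := by
  constructor
  · obtain ⟨j0, -, hj0⟩ := Finset.exists_mem_eq_sup' hne v
    refine ⟨fun i => if i = j0 then 1 else 0, ⟨fun i => by positivity, by
      simp [Finset.sum_ite_eq']⟩, ?_⟩
    rw [hj0]
    simp [ite_mul, Finset.sum_ite_eq']
  · rintro s ⟨p, ⟨hp0, hp1⟩, rfl⟩
    calc ∑ j, p j * v j ≤ ∑ j, p j * Finset.univ.sup' hne v :=
          Finset.sum_le_sum fun j _ =>
            mul_le_mul_of_nonneg_left (Finset.le_sup' v (Finset.mem_univ j)) (hp0 j)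
      _ = Finset.univ.sup' hne v := by rw [← Finset.sum_mul, hp1, one_mul]

/-- With `Δₙ` the standard simplex of `ℝⁿ`, a function `f : ℝⁿ → ℝ` is monotone
and additively homogeneous if and only if, for every `x`,
`f x = min_{y : f y = 0} max_{p ∈ Δₙ} ⟨p, x - y⟩`, both the minimum (over those `y` with
`f y = 0`) and the inner maximum being attained. -/
theorem stmt9 {n : ℕ} (hn : 0 < n) (f : (Fin n → ℝ) → ℝ) :
    (Monotone f ∧ ∀ (x : Fin n → ℝ) (c : ℝ), f (x + c • (1 : Fin n → ℝ)) = f x + c) ↔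
      ∀ x : Fin n → ℝ,
        (∀ y : Fin n → ℝ, f y = 0 → ∃ r : ℝ,
          IsGreatest {s : ℝ | ∃ p : Fin n → ℝ,
            ((∀ i, 0 ≤ p i) ∧ ∑ i, p i = 1) ∧ s = ∑ j, p j * (x j - y j)} r) ∧
        IsLeast {r : ℝ | ∃ y : Fin n → ℝ, f y = 0 ∧
          IsGreatest {s : ℝ | ∃ p : Fin n → ℝ,
            ((∀ i, 0 ≤ p i) ∧ ∑ i, p i = 1) ∧ s = ∑ j, p j * (x j - y j)} r} (f x) := by
  haveI : Nonempty (Fin n) := Fin.pos_iff_nonempty.mp hn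
  have hne : (Finset.univ : Finset (Fin n)).Nonempty := Finset.univ_nonempty
  set M : (Fin n → ℝ) → (Fin n → ℝ) → ℝ :=
    fun x y => Finset.univ.sup' hne (fun j => x j - y j) with hM
  constructor
  · rintro ⟨hmono, hhom⟩ x
    refine ⟨fun y _ => ⟨M x y, stmt9_aux hne _⟩, ?_, ?_⟩
    · -- membership: take y₀ = x - f x • 1
      refine ⟨x + (-f x) • (1 : Fin n → ℝ), by rw [hhom]; ring, ?_⟩
      have hval : Finset.univ.sup' hne
          (fun j => x j - (x + (-f x) • (1 : Fin n → ℝ)) j) = f x := by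
        have hv : (fun j => x j - (x + (-f x) • (1 : Fin n → ℝ)) j) =
            (fun _ => f x) := by
          funext j
          simp only [Pi.add_apply, Pi.smul_apply, Pi.one_apply, smul_eq_mul]
          ring
        rw [hv]
        exact Finset.sup'_const hne _
      have h2 := stmt9_aux hne (fun j => x j - (x + (-f x) • (1 : Fin n → ℝ)) j)
      rw [hval] at h2
      exact h2
    · rintro r ⟨y, hy, hgr⟩
      have hr : r = M x y := hgr.unique (stmt9_aux hne _)
      have hle : x ≤ y + (M x y) • (1 : Fin n → ℝ) := by
        intro j
        have := Finset.le_sup' (fun j => x j - y j) (Finset.mem_univ j)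
        simp only [Pi.add_apply, Pi.smul_apply, Pi.one_apply, smul_eq_mul, mul_one]
        linarith [this]
      calc f x ≤ f (y + (M x y) • (1 : Fin n → ℝ)) := hmono hle
        _ = f y + M x y := hhom y (M x y)
        _ = r := by rw [hy, hr]; ring
  · intro h
    have key : ∀ x, ∃ y, f y = 0 ∧ f x = M x y := by
      intro x
      obtain ⟨y, hy, hgr⟩ := (h x).2.1
      exact ⟨y, hy, hgr.unique (stmt9_aux hne _)⟩
    have lb : ∀ x y, f y = 0 → f x ≤ M x y := by
      intro x y hy
      exact (h x).2.2 ⟨y, hy, stmt9_aux hne _⟩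
    constructor
    · intro x x' hxx'
      obtain ⟨y, hy, hfx'⟩ := key x'
      have : M x y ≤ M x' y :=
        Finset.sup'_le _ _ fun j _ => le_trans (by have := hxx' j; simp; linarith)
          (Finset.le_sup' (fun j => x' j - y j) (Finset.mem_univ j))
      calc f x ≤ M x y := lb x y hy
        _ ≤ M x' y := this
        _ = f x' := hfx'.symm
    · intro x c
      have hshift : ∀ y, M (x + c • (1 : Fin n → ℝ)) y = M x y + c := by
        intro y
        have : (fun j => (x + c • (1 : Fin n → ℝ)) j - y j) =
            (fun j => (x j - y j) + c) := by
          funext j; simp [Pi.smul_apply]; ring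
        simp only [hM, this]
        exact stmt9_sup'_add_const hne _ c
      apply le_antisymm
      · obtain ⟨y, hy, hfx⟩ := key x
        have := lb (x + c • (1 : Fin n → ℝ)) y hy
        rw [hshift y, ← hfx] at this
        exact this
      · obtain ⟨y, hy, hfxc⟩ := key (x + c • (1 : Fin n → ℝ))
        have := lb x y hy
        rw [hfxc, hshift y]
        linarith
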